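/- The Hilbert function of a homogeneous tropical ideal I ⊆ R[x₀,…,xₙ], defined by H_I(d) = rank of the valuated matroid M_d(I) on the degree-d monomials, agrees with a polynomial in d for all sufficiently large d. -/

import Mathlib

open MvPolynomial

/-- `I` is a homogeneous tropical ideal of `R[x₀,…,xₙ]`, where `R = Tropical R₀` is a
valuative semifield (the multiplicative group `R₀ \ {∞}` is totally ordered and tropical
addition is `min`): `I` is a homogeneous ideal each of whose graded pieces `I_d` is the
set of vectors of a valuated matroid on the degree-`d` monomials, i.e. satisfies the
vector (monomial) elimination axiom. -/
def IsHomogTropicalIdeal {n : ℕ} {R₀ : Type*} [LinearOrderedAddCommGroupWithTop R₀]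
    (I : Ideal (MvPolynomial (Fin (n + 1)) (Tropical R₀))) : Prop :=
  (∀ f ∈ I, ∀ d : ℕ, homogeneousComponent d f ∈ I) ∧
  ∀ d : ℕ, ∀ f ∈ I, ∀ g ∈ I, f.IsHomogeneous d → g.IsHomogeneous d →
    ∀ u : Fin (n + 1) →₀ ℕ, coeff u f = coeff u g → coeff u f ≠ 0 →
      ∃ h ∈ I, h.IsHomogeneous d ∧ coeff u h = 0 ∧
        (∀ v, coeff v f + coeff v g ≤ coeff v h) ∧
        (∀ v, coeff v f ≠ coeff v g → coeff v h = coeff v f + coeff v g)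

/-- The Hilbert function of a homogeneous tropical ideal: `H_I(d)` is the rank of the
valuated matroid `M_d(I)` on the degree-`d` monomials whose vectors are `I_d`, i.e. the
maximal size of a set `S` of degree-`d` monomials supporting no nonzero element of
`I_d`. -/
noncomputable def tropicalHilbert {n : ℕ} {R₀ : Type*} [LinearOrderedAddCommGroupWithTop R₀]
    (I : Ideal (MvPolynomial (Fin (n + 1)) (Tropical R₀))) (d : ℕ) : ℕ :=
  sSup {k : ℕ | ∃ S : Finset ((Fin (n + 1)) →₀ ℕ), S.card = k ∧
    (∀ u ∈ S, (∑ i ∈ u.support, u i) = d) ∧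
    ∀ f ∈ I, f.IsHomogeneous d → f ≠ 0 → ¬ f.support ⊆ S}

namespace TropHilb

attribute [local instance] Classical.propDecidable

variable {n : ℕ} {R₀ : Type*} [LinearOrderedAddCommGroupWithTop R₀]

abbrev Mono (n : ℕ) := Fin (n + 1) →₀ ℕ

/-! ### Tropical facts -/

lemma trop_zero_def : (0 : Tropical R₀) = Tropical.trop ⊤ := rfl

lemma trop_eq_zero_iff {a : Tropical R₀} : a = 0 ↔ Tropical.untrop a = ⊤ := by
  constructor
  · rintro rfl; rfl
  · intro h; rw [← Tropical.trop_untrop a, h]; rfl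

lemma trop_mul_eq_zero_iff {a b : Tropical R₀} : a * b = 0 ↔ a = 0 ∨ b = 0 := by
  rw [trop_eq_zero_iff, trop_eq_zero_iff, trop_eq_zero_iff, Tropical.untrop_mul,
    LinearOrderedAddCommGroupWithTop.add_eq_top]

lemma trop_add_eq_zero_iff {a b : Tropical R₀} : a + b = 0 ↔ a = 0 ∧ b = 0 := by
  rw [trop_eq_zero_iff, trop_eq_zero_iff, trop_eq_zero_iff, Tropical.untrop_add, _root_.min_eq_top]

lemma trop_zero_top {a : Tropical R₀} : a ≤ 0 := by
  rw [← Tropical.untrop_le_iff, trop_zero_def, Tropical.untrop_trop]; exact le_top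

lemma exists_scale {a b : Tropical R₀} (ha : a ≠ 0) (hb : b ≠ 0) :
    ∃ c : Tropical R₀, c ≠ 0 ∧ c * b = a := by
  refine ⟨Tropical.trop (Tropical.untrop a + -Tropical.untrop b), ?_, ?_⟩
  · rw [Ne, trop_eq_zero_iff, Tropical.untrop_trop,
      LinearOrderedAddCommGroupWithTop.add_eq_top, not_or, LinearOrderedAddCommGroupWithTop.neg_eq_top]
    exact ⟨fun h => ha (trop_eq_zero_iff.2 h), fun h => hb (trop_eq_zero_iff.2 h)⟩
  · have hb' : Tropical.untrop b ≠ ⊤ := fun h => hb (trop_eq_zero_iff.2 h)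
    rw [Tropical.trop_mul_def, Tropical.untrop_trop, add_assoc,
      add_comm (-Tropical.untrop b), LinearOrderedAddCommGroupWithTop.add_neg_cancel_of_ne_top hb',
      add_zero, Tropical.trop_untrop]

/-! ### Degrees and the finset of degree-`d` monomials -/

lemma deg_eq_sum_univ (u : Mono n) : Finsupp.degree u = ∑ i : Fin (n + 1), u i := by
  rw [Finsupp.degree]
  exact Finset.sum_subset (Finset.subset_univ _) (by
    intro i _ hi
    exact Finsupp.notMem_support_iff.mp hi)

lemma deg_add (u v : Mono n) : Finsupp.degree (u + v) = Finsupp.degree u + Finsupp.degree v := by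
  simp [deg_eq_sum_univ, Finset.sum_add_distrib]

lemma deg_single_one (i : Fin (n + 1)) :
    Finsupp.degree (Finsupp.single i 1 : Mono n) = 1 := by
  simp [deg_eq_sum_univ, Finsupp.single_apply]

lemma deg_mono {u v : Mono n} (h : u ≤ v) : Finsupp.degree u ≤ Finsupp.degree v := by
  simp only [deg_eq_sum_univ]
  exact Finset.sum_le_sum fun i _ => Finsupp.le_def.mp h i

lemma deg_strict_mono {u v : Mono n} (h : u ≤ v) (hne : u ≠ v) :
    Finsupp.degree u < Finsupp.degree v := by
  obtain ⟨i, hi⟩ : ∃ i, u i ≠ v i := by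
    by_contra hc
    push_neg at hc
    exact hne (Finsupp.ext hc)
  simp only [deg_eq_sum_univ]
  exact Finset.sum_lt_sum (fun i _ => Finsupp.le_def.mp h i)
    ⟨i, Finset.mem_univ i, lt_of_le_of_ne (Finsupp.le_def.mp h i) hi⟩

/-- The finset of monomials of degree `d`. -/
noncomputable def Ed (n d : ℕ) : Finset (Mono n) :=
  ((Finsupp.finite_of_degree_le (σ := Fin (n + 1)) d).subset
    (fun u (hu : Finsupp.degree u = d) => le_of_eq hu)).toFinset

lemma mem_Ed {d : ℕ} {u : Mono n} : u ∈ Ed n d ↔ Finsupp.degree u = d := by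
  rw [Ed]; exact Set.Finite.mem_toFinset _

lemma support_deg {d : ℕ} {f : MvPolynomial (Fin (n + 1)) (Tropical R₀)}
    (hf : f.IsHomogeneous d) {u : Mono n} (hu : u ∈ f.support) : Finsupp.degree u = d := by
  rw [Finsupp.degree_eq_weight_one]
  exact hf (MvPolynomial.mem_support_iff.mp hu)

lemma support_subset_Ed {d : ℕ} {f : MvPolynomial (Fin (n + 1)) (Tropical R₀)}
    (hf : f.IsHomogeneous d) : f.support ⊆ Ed n d :=
  fun u hu => mem_Ed.mpr (support_deg hf hu)

/-! ### The leading monomial (minimal monomial of the support in lex order) -/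

noncomputable def lm (f : MvPolynomial (Fin (n + 1)) (Tropical R₀)) : Lex (Mono n) :=
  if h : f = 0 then toLex 0
  else (f.support.image (toLex : Mono n → Lex (Mono n))).min'
    ((MvPolynomial.support_nonempty.mpr h).image _)

variable {I : Ideal (MvPolynomial (Fin (n + 1)) (Tropical R₀))}

lemma lm_mem {f : MvPolynomial (Fin (n + 1)) (Tropical R₀)} (hf : f ≠ 0) :
    ∃ u ∈ f.support, lm f = toLex u := by
  rw [lm, dif_neg hf]
  have := Finset.min'_mem (f.support.image (toLex : Mono n → Lex (Mono n)))
    ((MvPolynomial.support_nonempty.mpr hf).image _)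
  obtain ⟨u, hu, he⟩ := Finset.mem_image.mp this
  exact ⟨u, hu, he.symm⟩

lemma lm_le {f : MvPolynomial (Fin (n + 1)) (Tropical R₀)} (hf : f ≠ 0) {u : Mono n}
    (hu : u ∈ f.support) : lm f ≤ toLex u := by
  rw [lm, dif_neg hf]
  exact Finset.min'_le _ _ (Finset.mem_image_of_mem _ hu)

lemma lm_eq {f : MvPolynomial (Fin (n + 1)) (Tropical R₀)} (hf : f ≠ 0) {u : Mono n}
    (hu : u ∈ f.support) (hmin : ∀ v ∈ f.support, toLex u ≤ toLex v) : lm f = toLex u := by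
  obtain ⟨w, hw, he⟩ := lm_mem hf
  rw [he]
  exact le_antisymm (he ▸ lm_le hf hu) (hmin w hw)

lemma lm_congr {f g : MvPolynomial (Fin (n + 1)) (Tropical R₀)} (hf : f ≠ 0)
    (hs : f.support = g.support) : lm f = lm g := by
  have hg : g ≠ 0 := by
    intro h
    rw [h, MvPolynomial.support_zero] at hs
    exact hf (MvPolynomial.support_eq_empty.mp hs)
  obtain ⟨u, hu, he⟩ := lm_mem hg
  rw [he]
  exact lm_eq hf (hs ▸ hu) (fun v hv => (he ▸ lm_le hg (hs ▸ hv : v ∈ g.support)))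

/-! ### Scaling by a nonzero constant -/

lemma support_C_mul {c : Tropical R₀} (hc : c ≠ 0)
    (g : MvPolynomial (Fin (n + 1)) (Tropical R₀)) : (C c * g).support = g.support := by
  ext v
  simp only [MvPolynomial.mem_support_iff, MvPolynomial.coeff_C_mul]
  rw [Ne, trop_mul_eq_zero_iff]
  tauto

/-! ### The elimination lemma -/

lemma elim_lemma (hI : IsHomogTropicalIdeal I) {d : ℕ}
    {f g : MvPolynomial (Fin (n + 1)) (Tropical R₀)}
    (hfI : f ∈ I) (hgI : g ∈ I) (hfh : f.IsHomogeneous d) (hgh : g.IsHomogeneous d)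
    {w : Mono n} (hwf : coeff w f ≠ 0) (hwg : coeff w g ≠ 0) (hlt : lm f < lm g) :
    ∃ h, h ∈ I ∧ h.IsHomogeneous d ∧ coeff w h = 0 ∧
      (∀ v, v ∈ h.support → v ∈ f.support ∪ g.support) ∧ h ≠ 0 ∧ lm h = lm f := by
  have hf0 : f ≠ 0 := fun h => hwf (by simp [h])
  have hg0 : g ≠ 0 := fun h => hwg (by simp [h])
  obtain ⟨c, hc, hcb⟩ := exists_scale hwf hwg
  set g' := C c * g with hg'
  have hg'I : g' ∈ I := Ideal.mul_mem_left I _ hgI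
  have hg's : g'.support = g.support := support_C_mul hc g
  have hg'0 : g' ≠ 0 := by
    intro h
    rw [h, MvPolynomial.support_zero] at hg's
    exact hg0 (MvPolynomial.support_eq_empty.mp hg's.symm)
  have hg'h : g'.IsHomogeneous d := by
    simpa using (MvPolynomial.isHomogeneous_C _ c).mul hgh
  have hg'lm : lm g' = lm g := lm_congr hg'0 hg's
  have hcoe : coeff w f = coeff w g' := by rw [hg', MvPolynomial.coeff_C_mul, hcb]
  obtain ⟨h, hhI, hhh, hhw, hle, hne⟩ := hI.2 d f hfI g' hg'I hfh hg'h w hcoe hwf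
  have hsupp : ∀ v, v ∈ h.support → v ∈ f.support ∪ g.support := by
    intro v hv
    by_contra hv'
    rw [Finset.mem_union, not_or, MvPolynomial.notMem_support_iff,
      MvPolynomial.notMem_support_iff] at hv'
    have h1 : coeff v f = 0 := hv'.1
    have h2 : coeff v g' = 0 := by
      rw [hg', MvPolynomial.coeff_C_mul, hv'.2, mul_zero]
    have := hle v
    rw [h1, h2, add_zero] at this
    exact MvPolynomial.mem_support_iff.mp hv (le_antisymm trop_zero_top this)
  -- the leading monomial of `f` survives in `h`
  obtain ⟨u, hu, hulm⟩ := lm_mem hf0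
  have hug' : coeff u g' = 0 := by
    by_contra hx
    have : lm g' ≤ toLex u := lm_le hg'0 (MvPolynomial.mem_support_iff.mpr hx)
    rw [hg'lm, ← hulm] at this
    exact absurd (lt_of_lt_of_le hlt this) (lt_irrefl _)
  have huh : coeff u h ≠ 0 := by
    have hne' : coeff u f ≠ coeff u g' := by
      rw [hug']
      exact MvPolynomial.mem_support_iff.mp hu
    rw [hne u hne', hug', add_zero]
    exact MvPolynomial.mem_support_iff.mp hu
  have hh0 : h ≠ 0 := fun hz => huh (by simp [hz])
  refine ⟨h, hhI, hhh, hhw, hsupp, hh0, ?_⟩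
  rw [hulm]
  refine lm_eq hh0 (MvPolynomial.mem_support_iff.mpr huh) ?_
  intro v hv
  rcases Finset.mem_union.mp (hsupp v hv) with hvf | hvg
  · rw [← hulm]; exact lm_le hf0 hvf
  · rw [← hulm]
    exact le_of_lt (lt_of_lt_of_le hlt ((hg'lm ▸ lm_le hg'0 (hg's ▸ hvg) : lm g ≤ toLex v)))

/-! ### One step of tropical Gaussian elimination -/

lemma step_elim (hI : IsHomogTropicalIdeal I) {d : ℕ} (w : Mono n)
    (F : Finset (MvPolynomial (Fin (n + 1)) (Tropical R₀)))
    (hF : ∀ f ∈ F, f ∈ I ∧ f.IsHomogeneous d ∧ f ≠ 0)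
    (hinj : ∀ f ∈ F, ∀ g ∈ F, lm f = lm g → f = g) :
    ∃ F' : Finset (MvPolynomial (Fin (n + 1)) (Tropical R₀)),
      (∀ f ∈ F', f ∈ I ∧ f.IsHomogeneous d ∧ f ≠ 0) ∧
      (∀ f ∈ F', ∀ g ∈ F', lm f = lm g → f = g) ∧
      F.card ≤ F'.card + 1 ∧ (∀ f ∈ F', coeff w f = 0) ∧
      (∀ f ∈ F', ∀ v ∈ f.support, ∃ g ∈ F, v ∈ g.support) := by
  classical
  by_cases hw : ∀ f ∈ F, coeff w f = 0
  · exact ⟨F, hF, hinj, Nat.le_succ _, hw, fun f hf v hv => ⟨f, hf, hv⟩⟩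
  set Fw := F.filter (fun f => coeff w f ≠ 0) with hFwdef
  have hFwsub : Fw ⊆ F := Finset.filter_subset _ _
  have hFwne : Fw.Nonempty := by
    push_neg at hw
    obtain ⟨f, hf, h⟩ := hw
    exact ⟨f, Finset.mem_filter.mpr ⟨hf, h⟩⟩
  obtain ⟨g, hgFw, hgmax⟩ := Finset.exists_max_image Fw lm hFwne
  have hgF : g ∈ F := hFwsub hgFw
  have key : ∀ x, x ∈ Fw.erase g → ∃ h, h ∈ I ∧ h.IsHomogeneous d ∧ coeff w h = 0 ∧
      (∀ v, v ∈ h.support → v ∈ x.support ∪ g.support) ∧ h ≠ 0 ∧ lm h = lm x := by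
    intro x hx
    obtain ⟨hxg, hxFw⟩ := Finset.mem_erase.mp hx
    have hxF : x ∈ F := hFwsub hxFw
    have hxw : coeff w x ≠ 0 := (Finset.mem_filter.mp hxFw).2
    have hgw : coeff w g ≠ 0 := (Finset.mem_filter.mp hgFw).2
    have hlt : lm x < lm g :=
      lt_of_le_of_ne (hgmax x hxFw) (fun he => hxg (hinj x hxF g hgF he))
    exact elim_lemma hI (hF x hxF).1 (hF g hgF).1 (hF x hxF).2.1 (hF g hgF).2.1 hxw hgw hlt
  choose e he using key
  set F' : Finset (MvPolynomial (Fin (n + 1)) (Tropical R₀)) :=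
    (F \ Fw) ∪ (Fw.erase g).attach.image (fun x => e x.1 x.2) with hF'def
  have hsrc : ∀ f ∈ F', (f ∈ F ∧ f ∉ Fw) ∨ ∃ x, ∃ hx : x ∈ Fw.erase g, f = e x hx := by
    intro f hf
    rcases Finset.mem_union.mp hf with h | h
    · exact Or.inl (Finset.mem_sdiff.mp h)
    · obtain ⟨x, _, hxe⟩ := Finset.mem_image.mp h
      exact Or.inr ⟨x.1, x.2, hxe.symm⟩
  have hmem : ∀ f ∈ F', f ∈ I ∧ f.IsHomogeneous d ∧ f ≠ 0 := by
    intro f hf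
    rcases hsrc f hf with ⟨hfF, _⟩ | ⟨x, hx, rfl⟩
    · exact hF f hfF
    · exact ⟨(he x hx).1, (he x hx).2.1, (he x hx).2.2.2.2.1⟩
  have hwfree : ∀ f ∈ F', coeff w f = 0 := by
    intro f hf
    rcases hsrc f hf with ⟨hfF, hfFw⟩ | ⟨x, hx, rfl⟩
    · by_contra hc
      exact hfFw (Finset.mem_filter.mpr ⟨hfF, hc⟩)
    · exact (he x hx).2.2.1
  have hcov : ∀ f ∈ F', ∀ v ∈ f.support, ∃ g' ∈ F, v ∈ g'.support := by
    intro f hf v hv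
    rcases hsrc f hf with ⟨hfF, _⟩ | ⟨x, hx, rfl⟩
    · exact ⟨f, hfF, hv⟩
    · rcases Finset.mem_union.mp ((he x hx).2.2.2.1 v hv) with h | h
      · exact ⟨x, hFwsub (Finset.mem_erase.mp hx).2, h⟩
      · exact ⟨g, hgF, h⟩
  have hinj' : ∀ f ∈ F', ∀ g' ∈ F', lm f = lm g' → f = g' := by
    intro f₁ hf₁ f₂ hf₂ hlm
    rcases hsrc f₁ hf₁ with ⟨h1F, h1w⟩ | ⟨x₁, hx₁, rfl⟩ <;>
      rcases hsrc f₂ hf₂ with ⟨h2F, h2w⟩ | ⟨x₂, hx₂, rfl⟩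
    · exact hinj f₁ h1F f₂ h2F hlm
    · exfalso
      have : lm f₁ = lm x₂ := hlm.trans (he x₂ hx₂).2.2.2.2.2
      have := hinj f₁ h1F x₂ (hFwsub (Finset.mem_erase.mp hx₂).2) this
      exact h1w (this ▸ (Finset.mem_erase.mp hx₂).2)
    · exfalso
      have : lm x₁ = lm f₂ := ((he x₁ hx₁).2.2.2.2.2).symm.trans hlm
      have := hinj x₁ (hFwsub (Finset.mem_erase.mp hx₁).2) f₂ h2F this
      exact h2w (this ▸ (Finset.mem_erase.mp hx₁).2)
    · have hlm' : lm x₁ = lm x₂ :=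
        ((he x₁ hx₁).2.2.2.2.2).symm.trans (hlm.trans (he x₂ hx₂).2.2.2.2.2)
      have hx : x₁ = x₂ := hinj x₁ (hFwsub (Finset.mem_erase.mp hx₁).2) x₂
        (hFwsub (Finset.mem_erase.mp hx₂).2) hlm'
      subst hx
      rfl
  have hdisj : Disjoint (F \ Fw) ((Fw.erase g).attach.image (fun x => e x.1 x.2)) := by
    rw [Finset.disjoint_left]
    intro f hf hf'
    obtain ⟨x, _, hxe⟩ := Finset.mem_image.mp hf'
    obtain ⟨hfF, hfFw⟩ := Finset.mem_sdiff.mp hf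
    have : lm f = lm x.1 := by rw [← hxe]; exact (he x.1 x.2).2.2.2.2.2
    have := hinj f hfF x.1 (hFwsub (Finset.mem_erase.mp x.2).2) this
    exact hfFw (this ▸ (Finset.mem_erase.mp x.2).2)
  have hcard : F.card ≤ F'.card + 1 := by
    have h1 : F'.card = (F \ Fw).card + ((Fw.erase g).attach.image (fun x => e x.1 x.2)).card :=
      Finset.card_union_of_disjoint hdisj
    have h2 : ((Fw.erase g).attach.image (fun x => e x.1 x.2)).card = (Fw.erase g).card := by
      rw [Finset.card_image_of_injective _ ?_, Finset.card_attach]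
      intro x y hxy
      have : lm x.1 = lm y.1 := by
        dsimp only at hxy
        rw [← (he x.1 x.2).2.2.2.2.2, ← (he y.1 y.2).2.2.2.2.2, hxy]
      exact Subtype.ext (hinj x.1 (hFwsub (Finset.mem_erase.mp x.2).2) y.1
        (hFwsub (Finset.mem_erase.mp y.2).2) this)
    have h3 : (F \ Fw).card + Fw.card = F.card := Finset.card_sdiff_add_card_eq_card hFwsub
    have h4 : (Fw.erase g).card = Fw.card - 1 := Finset.card_erase_of_mem hgFw
    have h5 : 1 ≤ Fw.card := Finset.card_pos.mpr hFwne
    omega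
  exact ⟨F', hmem, hinj', hcard, hwfree, hcov⟩

/-! ### Eliminating a whole set of monomials -/

lemma process_elim (hI : IsHomogTropicalIdeal I) {d : ℕ} (W : Finset (Mono n)) :
    ∀ F : Finset (MvPolynomial (Fin (n + 1)) (Tropical R₀)),
    (∀ f ∈ F, f ∈ I ∧ f.IsHomogeneous d ∧ f ≠ 0) →
    (∀ f ∈ F, ∀ g ∈ F, lm f = lm g → f = g) →
    ∃ F' : Finset (MvPolynomial (Fin (n + 1)) (Tropical R₀)),
      (∀ f ∈ F', f ∈ I ∧ f.IsHomogeneous d ∧ f ≠ 0) ∧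
      F.card ≤ F'.card + W.card ∧
      (∀ f ∈ F', ∀ w ∈ W, coeff w f = 0) ∧
      (∀ f ∈ F', ∀ v ∈ f.support, ∃ g ∈ F, v ∈ g.support) := by
  classical
  induction W using Finset.induction_on with
  | empty =>
    intro F hF hinj
    exact ⟨F, hF, by simp, by simp, fun f hf v hv => ⟨f, hf, hv⟩⟩
  | @insert w W hwW ih =>
    intro F hF hinj
    obtain ⟨F₁, hF₁, hinj₁, hcard₁, hw₁, hcov₁⟩ := step_elim hI w F hF hinj
    obtain ⟨F₂, hF₂, hcard₂, hW₂, hcov₂⟩ := ih F₁ hF₁ hinj₁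
    have havoidw : ∀ f ∈ F₂, coeff w f = 0 := by
      intro f hf
      by_contra hc
      obtain ⟨g, hg, hwg⟩ := hcov₂ f hf w (MvPolynomial.mem_support_iff.mpr hc)
      exact MvPolynomial.mem_support_iff.mp hwg (hw₁ g hg)
    refine ⟨F₂, hF₂, ?_, ?_, ?_⟩
    · rw [Finset.card_insert_of_notMem hwW]
      omega
    · intro f hf w' hw'
      rcases Finset.mem_insert.mp hw' with rfl | hw'
      · exact havoidw f hf
      · exact hW₂ f hf w' hw'
    · intro f hf v hv
      obtain ⟨g, hg, hvg⟩ := hcov₂ f hf v hv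
      exact hcov₁ g hg v hvg


/-! ### The set of leading monomials -/

def Lset (I : Ideal (MvPolynomial (Fin (n + 1)) (Tropical R₀))) : Set (Mono n) :=
  {u | ∃ f, f ∈ I ∧ f.IsHomogeneous (Finsupp.degree u) ∧ f ≠ 0 ∧ lm f = toLex u}

noncomputable def Lfin (I : Ideal (MvPolynomial (Fin (n + 1)) (Tropical R₀))) (d : ℕ) :
    Finset (Mono n) := (Ed n d).filter (· ∈ Lset I)

lemma deg_def (u : Mono n) : (∑ i ∈ u.support, u i) = Finsupp.degree u := rfl

/-- The Hilbert function equals the number of degree-`d` monomials that are not leading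
monomials. -/
lemma hilbert_eq (hI : IsHomogTropicalIdeal I) (d : ℕ) :
    tropicalHilbert I d = ((Ed n d) \ (Lfin I d)).card := by
  classical
  have hLsub : Lfin I d ⊆ Ed n d := Finset.filter_subset _ _
  -- the candidate maximal independent set
  set S₀ : Finset (Mono n) := (Ed n d) \ (Lfin I d) with hS₀
  have hmem : S₀.card ∈ {k : ℕ | ∃ S : Finset (Mono n), S.card = k ∧
      (∀ u ∈ S, (∑ i ∈ u.support, u i) = d) ∧
      ∀ f ∈ I, f.IsHomogeneous d → f ≠ 0 → ¬ f.support ⊆ S} := by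
    refine ⟨S₀, rfl, ?_, ?_⟩
    · intro u hu
      rw [deg_def]
      exact mem_Ed.mp (Finset.mem_sdiff.mp hu).1
    · intro f hfI hfh hf0 hsub
      obtain ⟨u, hu, hulm⟩ := lm_mem hf0
      have hud : Finsupp.degree u = d := support_deg hfh hu
      have huL : u ∈ Lfin I d := Finset.mem_filter.mpr ⟨mem_Ed.mpr hud,
        ⟨f, hfI, hud ▸ hfh, hf0, hulm⟩⟩
      exact (Finset.mem_sdiff.mp (hsub hu)).2 huL
  have hub : ∀ k ∈ {k : ℕ | ∃ S : Finset (Mono n), S.card = k ∧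
      (∀ u ∈ S, (∑ i ∈ u.support, u i) = d) ∧
      ∀ f ∈ I, f.IsHomogeneous d → f ≠ 0 → ¬ f.support ⊆ S}, k ≤ S₀.card := by
    rintro k ⟨S, rfl, hSdeg, hSind⟩
    by_contra hgt
    push_neg at hgt
    have hSE : S ⊆ Ed n d := fun u hu => mem_Ed.mpr ((deg_def u) ▸ hSdeg u hu)
    -- choose a polynomial for each leading monomial
    have hch : ∀ u ∈ Lfin I d, ∃ f, f ∈ I ∧ f.IsHomogeneous d ∧ f ≠ 0 ∧ lm f = toLex u := by
      intro u hu
      obtain ⟨hud, f, hfI, hfh, hf0, hflm⟩ := Finset.mem_filter.mp hu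
      exact ⟨f, hfI, (mem_Ed.mp hud) ▸ hfh, hf0, hflm⟩
    choose e he using hch
    set F₀ : Finset (MvPolynomial (Fin (n + 1)) (Tropical R₀)) :=
      (Lfin I d).attach.image (fun x => e x.1 x.2) with hF₀
    have hF₀src : ∀ f ∈ F₀, ∃ u, ∃ hu : u ∈ Lfin I d, f = e u hu := by
      intro f hf
      obtain ⟨x, _, hxe⟩ := Finset.mem_image.mp hf
      exact ⟨x.1, x.2, hxe.symm⟩
    have hF₀mem : ∀ f ∈ F₀, f ∈ I ∧ f.IsHomogeneous d ∧ f ≠ 0 := by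
      intro f hf
      obtain ⟨u, hu, rfl⟩ := hF₀src f hf
      exact ⟨(he u hu).1, (he u hu).2.1, (he u hu).2.2.1⟩
    have hF₀inj : ∀ f ∈ F₀, ∀ g ∈ F₀, lm f = lm g → f = g := by
      intro f hf g hg hlm
      obtain ⟨u, hu, rfl⟩ := hF₀src f hf
      obtain ⟨v, hv, rfl⟩ := hF₀src g hg
      have : toLex u = toLex v := by
        rw [← (he u hu).2.2.2, ← (he v hv).2.2.2, hlm]
      have huv : u = v := toLex.injective this
      subst huv
      rfl
    have hF₀card : F₀.card = (Lfin I d).card := by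
      rw [hF₀, Finset.card_image_of_injective _ ?_, Finset.card_attach]
      intro x y hxy
      dsimp only at hxy
      have : toLex x.1 = toLex y.1 := by
        rw [← (he x.1 x.2).2.2.2, ← (he y.1 y.2).2.2.2, hxy]
      exact Subtype.ext (toLex.injective this)
    set W : Finset (Mono n) := (Ed n d) \ S with hW
    obtain ⟨F', hF'mem, hF'card, hF'avoid, -⟩ := process_elim hI W F₀ hF₀mem hF₀inj
    have hWcard : W.card = (Ed n d).card - S.card := Finset.card_sdiff_of_subset hSE
    have hS₀card : S₀.card = (Ed n d).card - (Lfin I d).card := Finset.card_sdiff_of_subset hLsub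
    have hSle : S.card ≤ (Ed n d).card := Finset.card_le_card hSE
    have hLle : (Lfin I d).card ≤ (Ed n d).card := Finset.card_le_card hLsub
    have hF'pos : 0 < F'.card := by omega
    obtain ⟨f, hf⟩ := Finset.card_pos.mp hF'pos
    obtain ⟨hfI, hfh, hf0⟩ := hF'mem f hf
    refine hSind f hfI hfh hf0 ?_
    intro v hv
    have hvE : v ∈ Ed n d := support_subset_Ed hfh hv
    have hvW : v ∉ W := by
      intro hvW
      exact MvPolynomial.mem_support_iff.mp hv (hF'avoid f hf v hvW)
    rw [hW, Finset.mem_sdiff] at hvW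
    push_neg at hvW
    exact hvW hvE
  refine le_antisymm (csSup_le ⟨S₀.card, hmem⟩ hub) (le_csSup ⟨S₀.card, ?_⟩ hmem)
  intro k hk
  exact hub k hk


/-! ### Leading monomials form a monomial ideal -/

lemma single_le_of_mem_support {v : Mono n} {i : Fin (n + 1)} (hi : i ∈ v.support) :
    Finsupp.single i 1 ≤ v := by
  rw [Finsupp.le_def]
  intro j
  rw [Finsupp.single_apply]
  by_cases hji : i = j
  · subst hji
    rw [if_pos rfl]
    exact Nat.one_le_iff_ne_zero.mpr (Finsupp.mem_support_iff.mp hi)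
  · simp [hji]

lemma Lset_mul {u : Mono n} (hu : u ∈ Lset I) (i : Fin (n + 1)) :
    u + Finsupp.single i 1 ∈ Lset I := by
  obtain ⟨f, hfI, hfh, hf0, hflm⟩ := hu
  have huf : u ∈ f.support := by
    obtain ⟨u', hu', he⟩ := lm_mem hf0
    rwa [toLex.injective (he.symm.trans hflm)] at hu'
  set g := X i * f with hg
  have hgI : g ∈ I := Ideal.mul_mem_left _ _ hfI
  have hsupp : ∀ v, v ∈ g.support ↔ ∃ t ∈ f.support, v = Finsupp.single i 1 + t := by
    intro v
    constructor
    · intro hv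
      have hc := MvPolynomial.mem_support_iff.mp hv
      rw [hg, MvPolynomial.coeff_X_mul'] at hc
      split_ifs at hc with hi
      · refine ⟨v - Finsupp.single i 1, MvPolynomial.mem_support_iff.mpr hc, ?_⟩
        exact ((add_comm _ _).trans (tsub_add_cancel_of_le (single_le_of_mem_support hi))).symm
      · exact absurd rfl hc
    · rintro ⟨t, ht, rfl⟩
      rw [MvPolynomial.mem_support_iff, hg, MvPolynomial.coeff_X_mul]
      exact MvPolynomial.mem_support_iff.mp ht
  have hgh : g.IsHomogeneous (Finsupp.degree (u + Finsupp.single i 1)) := by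
    rw [deg_add, deg_single_one]
    have := (MvPolynomial.isHomogeneous_X (Tropical R₀) i).mul hfh
    rwa [add_comm 1 (Finsupp.degree u)] at this
  have hmemg : u + Finsupp.single i 1 ∈ g.support := by
    rw [hsupp]
    exact ⟨u, huf, add_comm _ _⟩
  have hg0 : g ≠ 0 := fun hz => by
    rw [hz, MvPolynomial.support_zero] at hmemg
    exact absurd hmemg (Finset.notMem_empty _)
  refine ⟨g, hgI, hgh, hg0, ?_⟩
  refine lm_eq hg0 hmemg ?_
  intro v hv
  obtain ⟨t, ht, rfl⟩ := (hsupp v).mp hv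
  have h1 : toLex u ≤ toLex t := hflm ▸ lm_le hf0 ht
  have h2 : toLex (u + Finsupp.single i 1) ≤ toLex (t + Finsupp.single i 1) :=
    add_le_add_left h1 (toLex (Finsupp.single i 1 : Mono n))
  have h3 : t + Finsupp.single i 1 = Finsupp.single i 1 + t := add_comm _ _
  rw [← h3]
  exact h2

lemma Lset_up_aux : ∀ k : ℕ, ∀ u v : Mono n, u ∈ Lset I → u ≤ v →
    Finsupp.degree v ≤ Finsupp.degree u + k → v ∈ Lset I := by
  intro k
  induction k with
  | zero =>
    intro u v hu huv hd
    rcases eq_or_ne u v with rfl | hne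
    · exact hu
    · exact absurd hd (by have := deg_strict_mono huv hne; omega)
  | succ k ih =>
    intro u v hu huv hd
    rcases eq_or_ne u v with rfl | hne
    · exact hu
    · obtain ⟨i, hi⟩ : ∃ i, u i ≠ v i := by
        by_contra hc
        push_neg at hc
        exact hne (Finsupp.ext hc)
      have hilt : u i < v i := lt_of_le_of_ne (Finsupp.le_def.mp huv i) hi
      refine ih (u + Finsupp.single i 1) v (Lset_mul hu i) ?_ ?_
      · rw [Finsupp.le_def]
        intro j
        rw [Finsupp.add_apply, Finsupp.single_apply]
        by_cases hji : i = j
        · subst hji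
          simp only [if_true, eq_self_iff_true, if_pos]
          omega
        · simp only [hji, if_false, add_zero]
          exact Finsupp.le_def.mp huv j
      · rw [deg_add, deg_single_one]
        omega

lemma Lset_up {u v : Mono n} (hu : u ∈ Lset I) (huv : u ≤ v) : v ∈ Lset I :=
  Lset_up_aux (Finsupp.degree v) u v hu huv (by omega)


/-! ### Stars and bars: counting monomials of degree `d` -/

lemma deg_eq_sum_id (u : Mono n) : Finsupp.degree u = u.sum fun _ => id := rfl

noncomputable def edEquiv (n e : ℕ) : {u : Mono n // u ∈ Ed n e} ≃ Sym (Fin (n + 1)) e where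
  toFun u := ⟨Finsupp.toMultiset u.1, by
    rw [Finsupp.card_toMultiset, ← deg_eq_sum_id, mem_Ed.mp u.2]⟩
  invFun m := ⟨Multiset.toFinsupp m.1, by
    rw [mem_Ed, deg_eq_sum_id, Multiset.toFinsupp_sum_eq, m.2]⟩
  left_inv u := by
    ext : 1
    exact Finsupp.toMultiset_toFinsupp u.1
  right_inv m := by
    ext : 1
    exact Multiset.toFinsupp_toMultiset m.1

lemma card_Ed (e : ℕ) : (Ed n e).card = (e + n).choose n := by
  classical
  have h1 : (Ed n e).card = Fintype.card {u : Mono n // u ∈ Ed n e} :=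
    (Fintype.card_coe (Ed n e)).symm
  rw [h1, Fintype.card_congr (edEquiv n e), Sym.card_sym_eq_choose, Fintype.card_fin]
  have h2 : n + 1 + e - 1 = e + n := by omega
  rw [h2]
  have h3 : e + n - n = e := by omega
  rw [← Nat.choose_symm (Nat.le_add_left n e), h3]

/-! ### The binomial coefficient polynomial -/

noncomputable def Qchoose (n : ℕ) : Polynomial ℚ :=
  Polynomial.C ((n.factorial : ℚ)⁻¹) * ∏ i ∈ Finset.range n, (Polynomial.X + Polynomial.C (i + 1 : ℚ))

lemma prod_asc (n e : ℕ) : ∏ i ∈ Finset.range n, (e + 1 + i) = n.factorial * (e + n).choose n := by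
  induction n with
  | zero => simp
  | succ n ih =>
    have harg : e + (n + 1) = e + n + 1 := by omega
    have harg2 : e + 1 + n = e + n + 1 := by omega
    rw [Finset.prod_range_succ, ih, Nat.factorial_succ, harg, harg2]
    have key : (e + n + 1) * Nat.choose (e + n) n = Nat.choose (e + n + 1) (n + 1) * (n + 1) := by
      simpa using Nat.add_one_mul_choose_eq (e + n) n
    calc n.factorial * (e + n).choose n * (e + n + 1)
        = n.factorial * ((e + n + 1) * (e + n).choose n) := by ring
      _ = n.factorial * ((e + n + 1).choose (n + 1) * (n + 1)) := by rw [key]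
      _ = (n + 1) * n.factorial * (e + n + 1).choose (n + 1) := by ring

lemma Qchoose_eval (n e : ℕ) : (Qchoose n).eval (e : ℚ) = ((e + n).choose n : ℚ) := by
  have hfac : (n.factorial : ℚ) ≠ 0 := Nat.cast_ne_zero.mpr (Nat.factorial_ne_zero n)
  rw [Qchoose, Polynomial.eval_mul, Polynomial.eval_C, Polynomial.eval_prod]
  have h1 : ∀ i ∈ Finset.range n, (Polynomial.X + Polynomial.C (i + 1 : ℚ)).eval (e : ℚ)
      = ((e + 1 + i : ℕ) : ℚ) := by
    intro i _
    rw [Polynomial.eval_add, Polynomial.eval_X, Polynomial.eval_C]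
    push_cast
    ring
  rw [Finset.prod_congr rfl h1, ← Nat.cast_prod, prod_asc n e]
  push_cast
  field_simp


/-! ### Shifted counts, and minimal generators of an upward closed set -/

lemma card_filter_le (s : Mono n) (d : ℕ) (hd : Finsupp.degree s ≤ d) :
    ((Ed n d).filter (fun u => s ≤ u)).card = (Ed n (d - Finsupp.degree s)).card := by
  classical
  refine Finset.card_bij' (fun u _ => u - s) (fun v _ => v + s) ?_ ?_ ?_ ?_
  · intro u hu
    obtain ⟨huE, hsu⟩ := Finset.mem_filter.mp hu
    have hdec : (u - s) + s = u := tsub_add_cancel_of_le hsu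
    have : Finsupp.degree (u - s) + Finsupp.degree s = d := by
      rw [← deg_add, hdec, mem_Ed.mp huE]
    rw [mem_Ed]
    show Finsupp.degree (u - s) = d - Finsupp.degree s
    omega
  · intro v hv
    refine Finset.mem_filter.mpr ⟨?_, le_add_self⟩
    rw [mem_Ed, deg_add, mem_Ed.mp hv]
    omega
  · intro u hu
    exact tsub_add_cancel_of_le (Finset.mem_filter.mp hu).2
  · intro v _
    exact add_tsub_cancel_right v s

lemma minimals_finite (U : Set (Mono n)) :
    {u | u ∈ U ∧ ∀ v ∈ U, v ≤ u → v = u}.Finite := by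
  refine IsAntichain.finite_of_partiallyWellOrderedOn (r := (· ≤ ·)) ?_ ?_
  · intro a ha b hb hne hab
    exact hne (hb.2 a ha.1 hab)
  · intro f
    haveI : IsWellOrder ℕ (· < ·) := isWellOrder_lt
    have hpwo : (Set.univ : Set (Fin (n + 1) → ℕ)).IsPWO :=
      Set.isPWO_univ_iff.mpr inferInstance
    obtain ⟨m, m', hmm', hle⟩ := hpwo (fun k => ⟨⇑(f k).1, Set.mem_univ _⟩)
    exact ⟨m, m', hmm', Finsupp.le_def.mpr (fun i => hle i)⟩

lemma exists_minimal_aux (U : Set (Mono n)) :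
    ∀ k : ℕ, ∀ u ∈ U, Finsupp.degree u ≤ k →
      ∃ m, (m ∈ U ∧ ∀ v ∈ U, v ≤ m → v = m) ∧ m ≤ u := by
  intro k
  induction k with
  | zero =>
    intro u hu _
    by_cases hmin : ∀ v ∈ U, v ≤ u → v = u
    · exact ⟨u, ⟨hu, hmin⟩, le_refl u⟩
    · push_neg at hmin
      obtain ⟨v, hv, hvu, hne⟩ := hmin
      exact absurd (deg_strict_mono hvu hne) (by omega)
  | succ k ih =>
    intro u hu hdeg
    by_cases hmin : ∀ v ∈ U, v ≤ u → v = u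
    · exact ⟨u, ⟨hu, hmin⟩, le_refl u⟩
    · push_neg at hmin
      obtain ⟨v, hv, hvu, hne⟩ := hmin
      have hlt := deg_strict_mono hvu hne
      obtain ⟨m, hm, hmv⟩ := ih v hv (by omega)
      exact ⟨m, hm, le_trans hmv hvu⟩


/-! ### The count of monomials outside an upward closed set is eventually polynomial -/

lemma count_poly (U : Set (Mono n)) (hup : ∀ u v : Mono n, u ∈ U → u ≤ v → v ∈ U) :
    ∃ (P : Polynomial ℚ) (N : ℕ), ∀ d : ℕ, N ≤ d →
      (((Ed n d).filter (fun u => u ∉ U)).card : ℚ) = P.eval (d : ℚ) := by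
  classical
  have hMfin := minimals_finite U
  set Mf := hMfin.toFinset with hMf
  have hmemU : ∀ u : Mono n, u ∈ U ↔ ∃ m ∈ Mf, m ≤ u := by
    intro u
    constructor
    · intro hu
      obtain ⟨m, hm, hmu⟩ := exists_minimal_aux U (Finsupp.degree u) u hu le_rfl
      exact ⟨m, (Set.Finite.mem_toFinset hMfin).mpr hm, hmu⟩
    · rintro ⟨m, hm, hmu⟩
      exact hup m u ((Set.Finite.mem_toFinset hMfin).mp hm).1 hmu
  set c : Finset (Mono n) → ℕ := fun t => Finsupp.degree (t.sup id) with hc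
  refine ⟨∑ t ∈ Mf.powerset, (-1 : ℚ) ^ t.card •
      ((Qchoose n).comp (Polynomial.X - Polynomial.C (c t : ℚ))), Mf.powerset.sup c, ?_⟩
  intro d hd
  have hct : ∀ t ∈ Mf.powerset, c t ≤ d := fun t ht => le_trans (Finset.le_sup ht) hd
  -- step 1 : card as a sum of indicators
  have h0 : (((Ed n d).filter (fun u => u ∉ U)).card : ℚ)
      = ∑ u ∈ Ed n d, (if u ∉ U then (1 : ℚ) else 0) := by
    rw [Finset.sum_boole]
  -- step 2 : indicator as a product
  have h1 : ∀ u, (if u ∉ U then (1 : ℚ) else 0)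
      = ∏ m ∈ Mf, ((1 : ℚ) - if m ≤ u then 1 else 0) := by
    intro u
    by_cases hu : u ∈ U
    · obtain ⟨m, hm, hmu⟩ := (hmemU u).mp hu
      rw [if_neg (by simpa using hu), eq_comm]
      refine Finset.prod_eq_zero hm ?_
      rw [if_pos hmu]
      ring
    · rw [if_pos hu, eq_comm]
      refine Finset.prod_eq_one ?_
      intro m hm
      have hnle : ¬ m ≤ u := fun hle => hu ((hmemU u).mpr ⟨m, hm, hle⟩)
      rw [if_neg hnle]
      ring
  -- step 3 : expand the product over subsets
  have h2 : ∀ u : Mono n, ∏ m ∈ Mf, ((1 : ℚ) - if m ≤ u then 1 else 0)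
      = ∑ t ∈ Mf.powerset, (-1 : ℚ) ^ t.card * (if t.sup id ≤ u then 1 else 0) := by
    intro u
    have hexp := Finset.prod_add (fun m => -(if m ≤ u then (1 : ℚ) else 0))
      (fun _ => (1 : ℚ)) Mf
    have hl : ∏ m ∈ Mf, ((1 : ℚ) - if m ≤ u then 1 else 0)
        = ∏ m ∈ Mf, (-(if m ≤ u then (1 : ℚ) else 0) + 1) := by
      refine Finset.prod_congr rfl fun m _ => by ring
    rw [hl, hexp]
    refine Finset.sum_congr rfl fun t ht => ?_
    rw [Finset.prod_const_one, mul_one]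
    have hneg : ∏ m ∈ t, -(if m ≤ u then (1 : ℚ) else 0)
        = (-1 : ℚ) ^ t.card * ∏ m ∈ t, (if m ≤ u then (1 : ℚ) else 0) := by
      rw [← Finset.prod_const (-1 : ℚ), ← Finset.prod_mul_distrib]
      refine Finset.prod_congr rfl fun m _ => by ring
    rw [hneg, Finset.prod_boole]
    congr 1
    by_cases hall : ∀ m ∈ t, m ≤ u
    · rw [if_pos hall, if_pos (Finset.sup_le_iff.mpr (by simpa using hall))]
    · rw [if_neg hall, if_neg ?_]
      intro hsup
      exact hall fun m hm => le_trans (Finset.le_sup (f := id) hm) hsup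
  -- step 4 : swap the sums and count
  have h3 : ∀ t ∈ Mf.powerset, ∑ u ∈ Ed n d, (if t.sup id ≤ u then (1 : ℚ) else 0)
      = (((d - c t) + n).choose n : ℚ) := by
    intro t ht
    rw [Finset.sum_boole]
    have : ((Ed n d).filter (fun u => t.sup id ≤ u)).card = (Ed n (d - c t)).card :=
      card_filter_le (t.sup id) d (hct t ht)
    rw [this, card_Ed]
  have h4 : (((Ed n d).filter (fun u => u ∉ U)).card : ℚ)
      = ∑ t ∈ Mf.powerset, (-1 : ℚ) ^ t.card * (((d - c t) + n).choose n : ℚ) := by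
    rw [h0]
    calc ∑ u ∈ Ed n d, (if u ∉ U then (1 : ℚ) else 0)
        = ∑ u ∈ Ed n d, ∑ t ∈ Mf.powerset,
            (-1 : ℚ) ^ t.card * (if t.sup id ≤ u then 1 else 0) := by
          refine Finset.sum_congr rfl fun u _ => ?_
          rw [h1 u, h2 u]
      _ = ∑ t ∈ Mf.powerset, ∑ u ∈ Ed n d,
            (-1 : ℚ) ^ t.card * (if t.sup id ≤ u then 1 else 0) := Finset.sum_comm
      _ = ∑ t ∈ Mf.powerset, (-1 : ℚ) ^ t.card * (((d - c t) + n).choose n : ℚ) := by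
          refine Finset.sum_congr rfl fun t ht => ?_
          rw [← Finset.mul_sum, h3 t ht]
  -- step 5 : evaluate the polynomial
  rw [h4, Polynomial.eval_finset_sum]
  refine Finset.sum_congr rfl fun t ht => ?_
  rw [Polynomial.eval_smul, Polynomial.eval_comp, Polynomial.eval_sub, Polynomial.eval_X,
    Polynomial.eval_C, smul_eq_mul]
  congr 1
  have hcast : (d : ℚ) - (c t : ℚ) = ((d - c t : ℕ) : ℚ) := by
    rw [Nat.cast_sub (hct t ht)]
  rw [hcast, Qchoose_eval]

end TropHilb

/-- **Hilbert functions of tropical ideals are eventually polynomial.**  The Hilbert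
function of a homogeneous tropical ideal `I ⊆ R[x₀,…,xₙ]` agrees with a polynomial for
all sufficiently large degrees. -/
theorem tropicalHilbert_eventually_polynomial {n : ℕ} {R₀ : Type*}
    [LinearOrderedAddCommGroupWithTop R₀]
    (I : Ideal (MvPolynomial (Fin (n + 1)) (Tropical R₀))) (hI : IsHomogTropicalIdeal I) :
    ∃ (P : Polynomial ℚ) (N : ℕ), ∀ d : ℕ, N ≤ d →
      (tropicalHilbert I d : ℚ) = P.eval (d : ℚ) := by
  classical
  obtain ⟨P, N, h⟩ := TropHilb.count_poly (TropHilb.Lset I)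
    (fun u v hu huv => TropHilb.Lset_up hu huv)
  refine ⟨P, N, fun d hd => ?_⟩
  rw [TropHilb.hilbert_eq hI d, ← h d hd]
  have hset : (TropHilb.Ed n d) \ (TropHilb.Lfin I d)
      = (TropHilb.Ed n d).filter (fun u => u ∉ TropHilb.Lset I) := by
    rw [TropHilb.Lfin]
    ext u
    simp [Finset.mem_sdiff, Finset.mem_filter]
    tauto
  rw [hset]
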